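/- The generalised Eulerian polynomial of type B satisfies the functional equation d_{B_η}(1/t) = t^{−n} d_{B_η}(t) for every composition η of n; equivalently, its coefficient sequence is palindromic: the number of w ∈ B_η with des(w) = k equals the number with des(w) = n − k for all 0 ≤ k ≤ n. -/

import Mathlib

/-- Signed multiset permutations of length `n` on letters `1,…,r`: a word together with
a sign vector (`true` meaning a negative sign). -/
abbrev SignedWord (n r : ℕ) := (Fin n → Fin r) × (Fin n → Bool)

/-- The 1-indexed letter sequence of a word, with `w_0 := 0` (letters are `1,…,r`). -/
def wordLetter {n r : ℕ} (w : Fin n → Fin r) : ℕ → ℕ := fun i =>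
  if h : i - 1 < n ∧ 1 ≤ i then ((w ⟨i - 1, h.1⟩ : Fin r) : ℕ) + 1 else 0

/-- The 1-indexed sign sequence, with `ε_0 := +1` (i.e. `false`). -/
def wordSign {n : ℕ} (e : Fin n → Bool) : ℕ → Bool := fun i =>
  if h : i - 1 < n ∧ 1 ≤ i then e ⟨i - 1, h.1⟩ else false

/-- The descent set of a signed multiset permutation `w^ε` (defined via
standardisation, equivalently by the explicit case description). -/
def signedWordDesSet {n r : ℕ} (w : SignedWord n r) : Finset ℕ :=
  (Finset.range n).filter (fun i =>
    (wordSign w.2 i = false ∧ wordSign w.2 (i + 1) = false ∧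
      wordLetter w.1 (i + 1) < wordLetter w.1 i) ∨
    (wordSign w.2 i = true ∧ wordSign w.2 (i + 1) = true ∧
      wordLetter w.1 i ≤ wordLetter w.1 (i + 1)) ∨
    (wordSign w.2 i = false ∧ wordSign w.2 (i + 1) = true))

/-- The set `B_η` of signed multiset permutations for the composition `η`. -/
def signedMultisetPerms (n r : ℕ) (η : Fin r → ℕ) : Finset (SignedWord n r) :=
  Finset.univ.filter (fun w =>
    ∀ j : Fin r, (Finset.univ.filter (fun i : Fin n => w.1 i = j)).card = η j)

lemma wordSign_flip {n : ℕ} (e : Fin n → Bool) (i : ℕ) (h1 : 1 ≤ i) (h2 : i - 1 < n) :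
    wordSign (fun j => !e j) i = !(wordSign e i) := by
  simp [wordSign, h1, h2]

lemma wordSign_zero' {n : ℕ} (e : Fin n → Bool) : wordSign e 0 = false := by
  simp [wordSign]

lemma wordLetter_zero' {n r : ℕ} (w : Fin n → Fin r) : wordLetter w 0 = 0 := by
  simp [wordLetter]

lemma wordLetter_pos {n r : ℕ} (w : Fin n → Fin r) (i : ℕ) (h1 : 1 ≤ i) (h2 : i - 1 < n) :
    1 ≤ wordLetter w i := by
  simp [wordLetter, h1, h2]

lemma flip_desSet {n r : ℕ} (w : SignedWord n r) :
    signedWordDesSet ((w.1, fun i => !w.2 i) : SignedWord n r)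
      = Finset.range n \ signedWordDesSet w := by
  ext i
  simp only [signedWordDesSet, Finset.mem_filter, Finset.mem_sdiff, Finset.mem_range,
    not_and, not_or]
  constructor
  all_goals intro h
  · refine ⟨h.1, fun hc => ?_⟩
    have hi := h.1
    have hc' := h.2
    have hb : wordSign (fun j => !w.2 j) (i + 1) = !(wordSign w.2 (i + 1)) :=
      wordSign_flip w.2 (i + 1) (by omega) (by omega)
    rcases Nat.eq_zero_or_pos i with h0 | h0
    · subst h0
      have ha : wordSign (fun j => !w.2 j) 0 = false := wordSign_zero' _
      have ha0 : wordSign w.2 0 = false := wordSign_zero' _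
      have hx : wordLetter w.1 0 = 0 := wordLetter_zero' _
      have hy : 1 ≤ wordLetter w.1 1 := wordLetter_pos w.1 1 (by omega) (by omega)
      rcases hb' : wordSign w.2 1 with _ | _ <;>
        simp_all
    · have ha : wordSign (fun j => !w.2 j) i = !(wordSign w.2 i) :=
        wordSign_flip w.2 i (by omega) (by omega)
      rcases ha1 : wordSign w.2 i with _ | _ <;>
        rcases hb1 : wordSign w.2 (i + 1) with _ | _ <;>
          simp_all
  · refine ⟨h.1, ?_⟩
    have hi := h.1
    have hc := h.2
    have hb : wordSign (fun j => !w.2 j) (i + 1) = !(wordSign w.2 (i + 1)) :=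
      wordSign_flip w.2 (i + 1) (by omega) (by omega)
    rcases Nat.eq_zero_or_pos i with h0 | h0
    · subst h0
      have ha : wordSign (fun j => !w.2 j) 0 = false := wordSign_zero' _
      have ha0 : wordSign w.2 0 = false := wordSign_zero' _
      have hx : wordLetter w.1 0 = 0 := wordLetter_zero' _
      have hy : 1 ≤ wordLetter w.1 1 := wordLetter_pos w.1 1 (by omega) (by omega)
      rcases hb' : wordSign w.2 1 with _ | _ <;>
        simp_all
    · have ha : wordSign (fun j => !w.2 j) i = !(wordSign w.2 i) :=
        wordSign_flip w.2 i (by omega) (by omega)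
      rcases ha1 : wordSign w.2 i with _ | _ <;>
        rcases hb1 : wordSign w.2 (i + 1) with _ | _ <;>
          simp_all

lemma desSet_subset_range {n r : ℕ} (w : SignedWord n r) :
    signedWordDesSet w ⊆ Finset.range n := Finset.filter_subset _ _

lemma flip_des_card {n r : ℕ} (w : SignedWord n r) :
    (signedWordDesSet ((w.1, fun i => !w.2 i) : SignedWord n r)).card
      = n - (signedWordDesSet w).card := by
  rw [flip_desSet, Finset.card_sdiff_of_subset (desSet_subset_range w), Finset.card_range]

lemma des_card_le {n r : ℕ} (w : SignedWord n r) :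
    (signedWordDesSet w).card ≤ n := by
  simpa using Finset.card_le_card (desSet_subset_range w)

lemma flip_mem {n r : ℕ} (η : Fin r → ℕ) (w : SignedWord n r)
    (hw : w ∈ signedMultisetPerms n r η) :
    ((w.1, fun i => !w.2 i) : SignedWord n r) ∈ signedMultisetPerms n r η := by
  simpa [signedMultisetPerms] using hw

/-- The generalised Eulerian numbers of type B are palindromic: for every composition
`η` of `n` and `0 ≤ k ≤ n`, the number of `w ∈ B_η` with `des(w) = k` equals the
number with `des(w) = n - k`.  Equivalently, `d_{B_η}(1/t) = t^{-n} d_{B_η}(t)`. -/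
theorem typeB_eulerian_palindromic (r : ℕ) (hr : 0 < r) (η : Fin r → ℕ)
    (hη : ∀ i, 0 < η i) (n : ℕ) (hn : n = ∑ i, η i) (k : ℕ) (hk : k ≤ n) :
    ((signedMultisetPerms n r η).filter (fun w => (signedWordDesSet w).card = k)).card
      = ((signedMultisetPerms n r η).filter
          (fun w => (signedWordDesSet w).card = n - k)).card := by
  apply Finset.card_nbij' (i := fun w => ((w.1, fun i => !w.2 i) : SignedWord n r))
    (j := fun w => ((w.1, fun i => !w.2 i) : SignedWord n r))
  · intro w hw
    simp only [Finset.mem_coe, Finset.mem_filter] at hw ⊢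
    exact ⟨flip_mem η w hw.1, by rw [flip_des_card, hw.2]⟩
  · intro w hw
    simp only [Finset.mem_coe, Finset.mem_filter] at hw ⊢
    refine ⟨flip_mem η w hw.1, ?_⟩
    rw [flip_des_card, hw.2]
    have := des_card_le w
    omega
  · intro w hw; ext i <;> simp
  · intro w hw; ext i <;> simp
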